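/- Let (A, P̄) be a polarized C*-algebra admitting norm normal ordering (the set of finite sums Σ b_k* a_k with a_k, b_k ∈ P̄ is norm-dense in A). If ω is a coherent state and ρ is a nonzero positive functional with ρ ≤ ω, then ρ = ρ(1)·ω; in particular every coherent state on such an algebra is a pure state. -/

import Mathlib

set_option linter.unusedSectionVars false

open scoped ComplexOrder InnerProductSpace

variable {A : Type*} [NormedRing A] [StarRing A] [CStarRing A] [NormedAlgebra ℂ A]
  [StarModule ℂ A] [CompleteSpace A]

/-- A state on a unital C*-algebra: a positive linear functional of norm one
(equivalently, taking the value 1 at the unit). -/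
def IsState (ω : A →ₗ[ℂ] ℂ) : Prop :=
  ω 1 = 1 ∧ ∀ x : A, 0 ≤ ω (star x * x)

/-- A polarization of a unital C*-algebra `A`: a closed commutative unital Banach
subalgebra `P` generating `A` (as a C*-algebra) with `P ∩ P* = ℂ·1`. -/
def IsPolarization (P : Subalgebra ℂ A) : Prop :=
  IsClosed (P : Set A) ∧
  (∀ a ∈ P, ∀ b ∈ P, a * b = b * a) ∧
  (Algebra.adjoin ℂ ((P : Set A) ∪ star (P : Set A))).topologicalClosure = ⊤ ∧
  (∀ x ∈ P, star x ∈ P → ∃ c : ℂ, x = algebraMap ℂ A c)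

/-- A coherent state on the polarized C*-algebra `(A, P)`. -/
def IsCoherentState (P : Subalgebra ℂ A) (ω : A →ₗ[ℂ] ℂ) : Prop :=
  IsState ω ∧ ∀ x : A, ∀ a ∈ P, ω (x * a) = ω x * ω a

/-- The polarized C*-algebra `(A, P)` admits norm normal ordering: finite sums
`∑ bₖ* aₖ` with `aₖ, bₖ ∈ P` are norm-dense in `A`. -/
def AdmitsNormalOrdering (P : Subalgebra ℂ A) : Prop :=
  Dense {x : A | ∃ (n : ℕ) (a b : Fin n → A), (∀ i, a i ∈ P ∧ b i ∈ P) ∧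
    x = ∑ i, star (b i) * a i}

/-- `(π, H, v)` is a GNS triple for the state `ω`. -/
def IsGNS {H : Type*} [NormedAddCommGroup H] [InnerProductSpace ℂ H] [CompleteSpace H]
    (ω : A →ₗ[ℂ] ℂ) (π : A →⋆ₐ[ℂ] (H →L[ℂ] H)) (v : H) : Prop :=
  ‖v‖ = 1 ∧ (∀ x : A, ω x = ⟪v, π x v⟫_ℂ) ∧
    Dense (Set.range fun x : A => π x v)

open scoped ComplexOrder

section Aux

open ComplexConjugate

variable {B : Type*} [CStarAlgebra B] (φ : B →ₗ[ℂ] ℂ)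

private lemma aux_im (hφ : ∀ x : B, 0 ≤ φ (star x * x)) (z : B) :
    (φ (star z * z)).im = 0 := by
  simpa using (Complex.le_def.mp (hφ z)).2.symm

private lemma aux_re (hφ : ∀ x : B, 0 ≤ φ (star x * x)) (z : B) :
    0 ≤ (φ (star z * z)).re := by
  simpa using (Complex.le_def.mp (hφ z)).1

private lemma aux_herm (hφ : ∀ x : B, 0 ≤ φ (star x * x)) (x y : B) :
    conj (φ (star y * x)) = φ (star x * y) := by
  have h1 : (φ (star x * y)).im + (φ (star y * x)).im = 0 := by
    have h := aux_im φ hφ (x + y)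
    simp only [star_add, add_mul, mul_add, map_add, Complex.add_im,
      aux_im φ hφ x, aux_im φ hφ y] at h
    linarith
  have h2 : (φ (star x * y)).re - (φ (star y * x)).re = 0 := by
    have h := aux_im φ hφ (x + Complex.I • y)
    simp only [star_add, star_smul, Complex.star_def, Complex.conj_I, add_mul, mul_add,
      smul_mul_assoc, mul_smul_comm, smul_smul, neg_smul, neg_mul, Complex.I_mul_I,
      map_add, map_smul, map_neg, smul_eq_mul, neg_neg, one_smul,
      Complex.add_im, Complex.neg_im, Complex.neg_re, Complex.mul_im, Complex.mul_re,
      Complex.I_re, Complex.I_im,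
      aux_im φ hφ x, aux_im φ hφ y, one_mul, zero_mul, mul_zero, mul_one,
      add_zero, zero_add, neg_zero] at h
    linarith
  apply Complex.ext
  · simp only [Complex.conj_re]
    linarith
  · simp only [Complex.conj_im]
    linarith

private lemma aux_CS (hφ : ∀ x : B, 0 ≤ φ (star x * x)) (x y : B) :
    ‖φ (star x * y)‖ * ‖φ (star x * y)‖ ≤ (φ (star x * x)).re * (φ (star y * y)).re := by
  letI core : PreInnerProductSpace.Core ℂ B :=
    { inner := fun a b => φ (star a * b)
      conj_inner_symm := fun a b => aux_herm φ hφ a b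
      re_inner_nonneg := fun z => by simpa using (Complex.le_def.mp (hφ z)).1
      add_left := fun a b c => by simp [star_add, add_mul]
      smul_left := fun a b r => by
        simp [star_smul, smul_mul_assoc, Complex.star_def] }
  have h := @InnerProductSpace.Core.inner_mul_inner_self_le ℂ B _ _ _ core x y
  have h2 : ‖φ (star y * x)‖ = ‖φ (star x * y)‖ := by
    rw [← aux_herm φ hφ x y, RCLike.norm_conj]
  calc ‖φ (star x * y)‖ * ‖φ (star x * y)‖
      = ‖φ (star x * y)‖ * ‖φ (star y * x)‖ := by rw [h2]
    _ ≤ (φ (star x * x)).re * (φ (star y * y)).re := h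

private lemma aux_bound [Nontrivial B] (hφ : ∀ x : B, 0 ≤ φ (star x * x)) (x : B) :
    (φ (star x * x)).re ≤ (φ 1).re * (‖x‖ * ‖x‖) := by
  set a : B := star x * x with ha_def
  have ha : IsSelfAdjoint a := IsSelfAdjoint.star_mul_self x
  have hspec : ∀ t ∈ spectrum ℝ a, 0 ≤ ‖x‖ * ‖x‖ - t := by
    intro t ht
    have h1 : ‖t‖ ≤ ‖a‖ := spectrum.norm_le_norm_of_mem ht
    have h2 : ‖a‖ = ‖x‖ * ‖x‖ := CStarRing.norm_star_mul_self
    have h3 : t ≤ |t| := le_abs_self t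
    rw [Real.norm_eq_abs] at h1
    linarith
  set f : ℝ → ℝ := fun t => Real.sqrt (‖x‖ * ‖x‖ - t) with hf
  have hy : star (cfc f a) * cfc f a = algebraMap ℝ B (‖x‖ * ‖x‖) - a := by
    rw [(cfc_predicate f a).star_eq]
    rw [← cfc_mul f f a (by fun_prop) (by fun_prop)]
    rw [cfc_congr (g := fun t => ‖x‖ * ‖x‖ - t)
      (fun t ht => Real.mul_self_sqrt (hspec t ht))]
    rw [cfc_sub (fun _ => ‖x‖ * ‖x‖) (fun t => t) a, cfc_const _ a, cfc_id' ℝ a]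
  have hpos := aux_re φ hφ (cfc f a)
  rw [hy] at hpos
  have halg : φ (algebraMap ℝ B (‖x‖ * ‖x‖)) = ((‖x‖ * ‖x‖ : ℝ) : ℂ) * φ 1 := by
    rw [IsScalarTower.algebraMap_apply ℝ ℂ B, Algebra.algebraMap_eq_smul_one, map_smul,
      smul_eq_mul]
    rfl
  rw [map_sub, halg] at hpos
  simp only [Complex.sub_re, Complex.mul_re, Complex.ofReal_re, Complex.ofReal_im,
    zero_mul, sub_zero] at hpos
  linarith

private lemma aux_cont [Nontrivial B] (hφ : ∀ x : B, 0 ≤ φ (star x * x)) :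
    Continuous φ := by
  refine AddMonoidHomClass.continuous_of_bound φ ((φ 1).re) fun x => ?_
  have h1 := aux_CS φ hφ 1 x
  simp only [star_one, one_mul, mul_one] at h1
  have h2 := aux_bound φ hφ x
  have h3 : 0 ≤ (φ 1).re := by simpa using aux_re φ hφ 1
  nlinarith [norm_nonneg (φ x), norm_nonneg x, mul_nonneg h3 (norm_nonneg x),
    mul_nonneg (mul_nonneg h3 (norm_nonneg x)) (norm_nonneg x)]

end Aux

/-- On a polarized C*-algebra admitting norm normal ordering, any nonzero
positive functional dominated by a coherent state `ω` is a multiple of it: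
`ρ = ρ(1)·ω`; in particular every coherent state is pure. -/
theorem stmt_6 (P : Subalgebra ℂ A) (hP : IsPolarization P)
    (hno : AdmitsNormalOrdering P)
    (ω : A →ₗ[ℂ] ℂ) (hω : IsCoherentState P ω)
    (ρ : A →ₗ[ℂ] ℂ) (hρpos : ∀ x : A, 0 ≤ ρ (star x * x)) (hρne : ρ ≠ 0)
    (hle : ∀ x : A, ρ (star x * x) ≤ ω (star x * x)) :
    ρ = ρ 1 • ω := by
  rcases subsingleton_or_nontrivial A with hA | hA
  · exact absurd (LinearMap.ext fun x => by
      rw [Subsingleton.elim x (0 : A), map_zero, LinearMap.zero_apply]) hρne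
  letI : CStarAlgebra A := { }
  obtain ⟨⟨hω1, hωpos⟩, hcoh⟩ := hω
  have hωherm : ∀ x : A, (starRingEnd ℂ) (ω x) = ω (star x) := fun x => by
    simpa using aux_herm ω hωpos x 1
  have hρherm : ∀ x : A, (starRingEnd ℂ) (ρ x) = ρ (star x) := fun x => by
    simpa using aux_herm ρ hρpos x 1
  have hρ1 : (starRingEnd ℂ) (ρ 1) = ρ 1 := by
    rw [hρherm 1, star_one]
  -- key step: for `a ∈ P`, `ρ (x * a) = ω a * ρ x`
  have hkey : ∀ a ∈ P, ∀ x : A, ρ (x * a) = ω a * ρ x := by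
    intro a ha x
    set c : A := a - ω a • 1 with hc
    have hωc : ω (star c * c) = 0 := by
      have h1 : ω (star a * a) = ω (star a) * ω a := hcoh (star a) a ha
      have h2 : ω (star a) = (starRingEnd ℂ) (ω a) := (hωherm a).symm
      simp only [hc, star_sub, star_smul, star_one, sub_mul, mul_sub, map_sub, map_smul,
        smul_mul_assoc, mul_smul_comm, smul_eq_mul, Complex.star_def, mul_one, one_mul,
        smul_smul]
      rw [h1, h2, hω1]
      ring
    have hρc : ρ (star c * c) = 0 := le_antisymm (hωc ▸ hle c) (hρpos c)
    have hxc : ρ (x * c) = 0 := by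
      have hcs := aux_CS ρ hρpos (star x) c
      rw [star_star, hρc] at hcs
      simp only [Complex.zero_re, mul_zero] at hcs
      have h0 := norm_nonneg (ρ (x * c))
      have : ‖ρ (x * c)‖ = 0 := by nlinarith
      exact norm_eq_zero.mp this
    have hsplit : x * a = x * c + ω a • x := by
      rw [hc, mul_sub, mul_smul_comm, mul_one]
      abel
    rw [hsplit, map_add, map_smul, hxc, zero_add, smul_eq_mul]
  have hρP : ∀ b ∈ P, ρ b = ω b * ρ 1 := fun b hb => by
    simpa using hkey b hb 1
  have hmain : ∀ b ∈ P, ∀ a ∈ P, ρ (star b * a) = ρ 1 * ω (star b * a) := by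
    intro b hb a ha
    rw [hkey a ha (star b)]
    have h1 : ρ (star b) = (starRingEnd ℂ) (ω b) * ρ 1 := by
      rw [← hρherm b, hρP b hb, map_mul, hρ1]
    rw [h1, hcoh (star b) a ha, ← hωherm b]
    ring
  -- extend by density and continuity
  have hcρ : Continuous ρ := aux_cont ρ hρpos
  have hcω : Continuous ω := aux_cont ω hωpos
  have hno' : Dense {x : A | ∃ (n : ℕ) (a b : Fin n → A), (∀ i, a i ∈ P ∧ b i ∈ P) ∧
      x = ∑ i, star (b i) * a i} := hno
  have hEq : Set.EqOn (⇑ρ) (fun x => ρ 1 * ω x)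
      {x : A | ∃ (n : ℕ) (a b : Fin n → A), (∀ i, a i ∈ P ∧ b i ∈ P) ∧
        x = ∑ i, star (b i) * a i} := by
    rintro x ⟨n, a, b, hab, rfl⟩
    simp only [map_sum, Finset.mul_sum]
    exact Finset.sum_congr rfl fun i _ => hmain (b i) (hab i).2 (a i) (hab i).1
  have hAll : Set.EqOn (⇑ρ) (fun x => ρ 1 * ω x) (Set.univ : Set A) := by
    rw [← hno'.closure_eq]
    exact hEq.closure hcρ (continuous_const.mul hcω)
  ext x
  have := hAll (Set.mem_univ x)
  simpa using this
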